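/- arXiv:2102.01601 — 2 statements merged into one kernel-verified Lean document; each statement's English description precedes it below -/
import Mathlib

section
/- Let S = {s₁, …, sₙ} be generators and R a set of words of the form s_i^{ε_i} s_j^{ε_j} s_k^{ε_k} with ε ∈ {−1,1}. For each such relator r, let φ_r be the 3CNF formula (x_i^{ε_i} ∨ x_j^{ε_j} ∨ x_k^{ε_k}) ∧ (x_i^{−ε_i} ∨ x_j^{−ε_j} ∨ x_k^{−ε_k}), where x^1 = x and x^{−1} = ¬x, and let Φ_R be the conjunction of all φ_r for r ∈ R. If the group Γ = ⟨S | R⟩ is left-orderable and no generator s_i maps to the identity of Γ, then Φ_R is satisfiable. -/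
/-- A length-3 relator: an ordered triple of signed generators
`s_i^{ε_i} s_j^{ε_j} s_k^{ε_k}`, where `true` stands for exponent `+1`. -/
abbrev Rel3 (n : ℕ) := (Fin n × Bool) × (Fin n × Bool) × (Fin n × Bool)

/-- The signed generator `s_i^{ε}` in the free group. -/
def sgen {n : ℕ} (p : Fin n × Bool) : FreeGroup (Fin n) :=
  if p.2 then FreeGroup.of p.1 else (FreeGroup.of p.1)⁻¹

/-- The word `s_i^{ε_i} s_j^{ε_j} s_k^{ε_k}` in the free group. -/
def word3 {n : ℕ} (r : Rel3 n) : FreeGroup (Fin n) :=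
  sgen r.1 * sgen r.2.1 * sgen r.2.2

/-- The value of the literal `x_i^{ε}` (`x^1 = x`, `x^{-1} = ¬x`) under `η`. -/
def lit {n : ℕ} (η : Fin n → Bool) (p : Fin n × Bool) : Bool :=
  η p.1 == p.2

/-- `η` satisfies
`φ_r = (x_i^{ε_i} ∨ x_j^{ε_j} ∨ x_k^{ε_k}) ∧ (x_i^{-ε_i} ∨ x_j^{-ε_j} ∨ x_k^{-ε_k})`. -/
def satPhi {n : ℕ} (η : Fin n → Bool) (r : Rel3 n) : Bool :=
  (lit η r.1 || lit η r.2.1 || lit η r.2.2) &&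
    (!lit η r.1 || !lit η r.2.1 || !lit η r.2.2)

/-- If `Γ = ⟨S | R⟩` (all relators of length 3) is left-orderable and no
generator maps to the identity of `Γ`, then `Φ_R` is satisfiable. -/
theorem stmt_3 {n : ℕ} (R : Set (Rel3 n))
    (hLO : ∃ lo : LinearOrder (PresentedGroup (word3 '' R)),
      ∀ a b g : PresentedGroup (word3 '' R), lo.le a b → lo.le (g * a) (g * b))
    (hgen : ∀ i : Fin n, (PresentedGroup.of i : PresentedGroup (word3 '' R)) ≠ 1) :
    ∃ η : Fin n → Bool, ∀ r ∈ R, satPhi η r = true := by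
  classical
  obtain ⟨lo, hmul⟩ := hLO
  letI := lo
  have hmul' : ∀ a b g : PresentedGroup (word3 '' R), a < b → g * a < g * b := by
    intro a b g h
    have hle : g * a ≤ g * b := hmul a b g h.le
    exact lt_of_le_of_ne hle (fun hc => h.ne (mul_left_cancel hc))
  have hinv : ∀ x : PresentedGroup (word3 '' R), x < 1 → 1 < x⁻¹ := by
    intro x h
    have := hmul' x 1 x⁻¹ h
    simpa using this
  have hinv' : ∀ x : PresentedGroup (word3 '' R), 1 < x → x⁻¹ < 1 := by
    intro x h
    have := hmul' 1 x x⁻¹ h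
    simpa using this
  set π : FreeGroup (Fin n) →* PresentedGroup (word3 '' R) :=
    PresentedGroup.mk (word3 '' R) with hπ
  have hof : ∀ i : Fin n, π (FreeGroup.of i) = PresentedGroup.of i := fun _ => rfl
  set η : Fin n → Bool :=
    fun i => decide ((1 : PresentedGroup (word3 '' R)) < PresentedGroup.of i) with hη
  refine ⟨η, ?_⟩
  have hne : ∀ u : Fin n × Bool, π (sgen u) ≠ 1 := by
    rintro ⟨i, ε⟩
    cases ε with
    | true =>
      have : sgen (i, true) = FreeGroup.of i := rfl
      rw [this, hof]; exact hgen i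
    | false =>
      have : sgen (i, false) = (FreeGroup.of i)⁻¹ := rfl
      rw [this, map_inv, hof]
      simpa using hgen i
  have hlit : ∀ u : Fin n × Bool, lit η u = true ↔ 1 < π (sgen u) := by
    rintro ⟨i, ε⟩
    cases ε with
    | true =>
      have hs : sgen (i, true) = FreeGroup.of i := rfl
      rw [hs, hof]
      simp [lit, hη]
    | false =>
      have hs : sgen (i, false) = (FreeGroup.of i)⁻¹ := rfl
      rw [hs, map_inv, hof]
      have hd : lit η (i, false) = true ↔
          ¬ (1 : PresentedGroup (word3 '' R)) < PresentedGroup.of i := by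
        simp [lit, hη]
      rw [hd]
      constructor
      · intro h
        exact hinv _ (lt_of_le_of_ne (not_lt.1 h) (hgen i))
      · intro h
        have := hinv' _ h
        rw [inv_inv] at this
        exact not_lt.2 this.le
  intro r hr
  have hrel : π (word3 r) = 1 := by
    have : word3 r ∈ Subgroup.normalClosure (word3 '' R) :=
      Subgroup.subset_normalClosure ⟨r, hr, rfl⟩
    exact (QuotientGroup.eq_one_iff _).2 this
  obtain ⟨p, q, s⟩ := r
  set a := π (sgen p) with hA
  set b := π (sgen q) with hB
  set c := π (sgen s) with hC
  have habc : a * b * c = 1 := by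
    have : word3 (p, q, s) = sgen p * sgen q * sgen s := rfl
    rw [this] at hrel
    simpa [hA, hB, hC] using hrel
  have notall_pos : ¬ (1 < a ∧ 1 < b ∧ 1 < c) := by
    rintro ⟨h1, h2, h3⟩
    have hbc : (1 : PresentedGroup (word3 '' R)) < b * c :=
      lt_trans h2 (by simpa using hmul' 1 c b h3)
    have : (1 : PresentedGroup (word3 '' R)) < a * b * c := by
      have := lt_trans h1 (by simpa using hmul' 1 (b * c) a hbc)
      simpa [mul_assoc] using this
    rw [habc] at this
    exact lt_irrefl _ this
  have notall_neg : ¬ (a < 1 ∧ b < 1 ∧ c < 1) := by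
    rintro ⟨h1, h2, h3⟩
    have hbc : b * c < 1 := lt_trans (by simpa using hmul' c 1 b h3) h2
    have : a * b * c < 1 := by
      have := lt_trans (by simpa using hmul' (b * c) 1 a hbc) h1
      simpa [mul_assoc] using this
    rw [habc] at this
    exact lt_irrefl _ this
  have key : ∀ u : Fin n × Bool, lit η u = false → π (sgen u) < 1 := by
    intro u hu
    have h2 : ¬ (1 < π (sgen u)) := fun hx => by
      simp [(hlit u).2 hx] at hu
    exact lt_of_le_of_ne (not_lt.1 h2) (hne u)
  rcases Bool.eq_false_or_eq_true (lit η p) with h1 | h1 <;>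
  rcases Bool.eq_false_or_eq_true (lit η q) with h2 | h2 <;>
  rcases Bool.eq_false_or_eq_true (lit η s) with h3 | h3 <;>
  simp only [satPhi, h1, h2, h3, Bool.or_true, Bool.true_or, Bool.or_false, Bool.false_or,
    Bool.not_true, Bool.not_false, Bool.and_true, Bool.true_and, Bool.and_false,
    Bool.false_and]
  · exact absurd ⟨(hlit p).1 h1, (hlit q).1 h2, (hlit s).1 h3⟩ notall_pos
  · exact absurd ⟨key p h1, key q h2, key s h3⟩ notall_neg
end

section
/- Let S = {s₁,…,sₙ}, R a set of length-3 words over S ∪ S⁻¹, and for A ⊆ S let R_A be the set of relators in R all of whose letters come from A ∪ A⁻¹, and Φ_{R,A} the conjunction of φ_r over r ∈ R_A, where φ_r = (x_i^{ε_i} ∨ x_j^{ε_j} ∨ x_k^{ε_k}) ∧ (x_i^{−ε_i} ∨ x_j^{−ε_j} ∨ x_k^{−ε_k}) for r = s_i^{ε_i}s_j^{ε_j}s_k^{ε_k}. If q : Γ → Q is a surjective homomorphism onto a left-orderable group Q such that no element of A lies in the kernel of q∘ι, then Φ_{R,A} is satisfiable. -/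
/-- If `q : Γ ↠ Q` is an epimorphism onto a left-orderable group `Q` with no
generator from `A` in the kernel of `q ∘ ι`, then `Φ_{R,A}` is satisfiable. -/
theorem stmt_4 {n : ℕ} (R : Set (Rel3 n)) (A : Set (Fin n))
    {Q : Type*} [Group Q]
    (q : PresentedGroup (word3 '' R) →* Q) (hsurj : Function.Surjective q)
    (hLO : ∃ lo : LinearOrder Q, ∀ a b g : Q, lo.le a b → lo.le (g * a) (g * b))
    (hker : ∀ i ∈ A, q (PresentedGroup.of i) ≠ 1) :
    ∃ η : Fin n → Bool, ∀ r ∈ R,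
      r.1.1 ∈ A → r.2.1.1 ∈ A → r.2.2.1 ∈ A → satPhi η r = true := by
  classical
  obtain ⟨lo, hmul⟩ := hLO
  letI := lo
  set f : FreeGroup (Fin n) →* Q := q.comp (QuotientGroup.mk' _) with hf
  have hmul_lt : ∀ a b g : Q, a < b → g * a < g * b := by
    intro a b g hab
    exact lt_of_le_of_ne (hmul _ _ _ hab.le) fun h => hab.ne (mul_left_cancel h)
  have hinv : ∀ x : Q, x < 1 → 1 < x⁻¹ := by
    intro x hx
    have := hmul_lt _ _ x⁻¹ hx
    simpa using this
  have hinv' : ∀ x : Q, 1 < x → x⁻¹ < 1 := by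
    intro x hx
    have := hmul_lt _ _ x⁻¹ hx
    simpa using this
  have hpos : ∀ a b c : Q, 1 < a → 1 < b → 1 < c → 1 < a * b * c := by
    intro a b c ha hb hc
    have h1 : a * 1 < a * b := hmul_lt _ _ a hb
    have h2 : (a * b) * 1 < (a * b) * c := hmul_lt _ _ (a * b) hc
    simp only [mul_one] at h1 h2
    exact lt_trans ha (lt_trans h1 h2)
  have hneg : ∀ a b c : Q, a < 1 → b < 1 → c < 1 → a * b * c < 1 := by
    intro a b c ha hb hc
    have h1 : a * b < a * 1 := hmul_lt _ _ a hb
    have h2 : (a * b) * c < (a * b) * 1 := hmul_lt _ _ (a * b) hc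
    simp only [mul_one] at h1 h2
    exact lt_trans h2 (lt_trans h1 ha)
  set η : Fin n → Bool := fun i => decide (1 < f (FreeGroup.of i)) with hη
  refine ⟨η, ?_⟩
  intro r hr h1 h2 h3
  have hrel : f (sgen r.1) * f (sgen r.2.1) * f (sgen r.2.2) = 1 := by
    have : f (word3 r) = 1 := by
      show q (QuotientGroup.mk' _ (word3 r)) = 1
      have h0 : (QuotientGroup.mk' (Subgroup.normalClosure (word3 '' R)) (word3 r)) = 1 := by
        rw [QuotientGroup.mk'_apply, QuotientGroup.eq_one_iff]
        exact Subgroup.subset_normalClosure ⟨r, hr, rfl⟩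
      rw [h0]; exact map_one q
    simpa [word3, map_mul] using this
  have key : ∀ p : Fin n × Bool, p.1 ∈ A →
      (lit η p = true ↔ 1 < f (sgen p)) ∧ f (sgen p) ≠ 1 := by
    intro p hp
    have hne : f (FreeGroup.of p.1) ≠ 1 := hker p.1 hp
    obtain ⟨i, ε⟩ := p
    simp only at hne
    cases ε with
    | true =>
      refine ⟨by simp [lit, sgen, hη], by simpa [sgen] using hne⟩
    | false =>
      have hsg : sgen (i, false) = (FreeGroup.of i)⁻¹ := rfl
      refine ⟨?_, by simp [hsg, hne]⟩
      simp only [lit, hη, hsg, map_inv]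
      rw [Bool.beq_eq_decide_eq]
      simp only [decide_eq_true_eq, decide_eq_decide]
      constructor
      · intro h
        have hnl : ¬ (1 < f (FreeGroup.of i)) := by
          intro hx
          simp [hx] at h
        exact hinv _ (lt_of_le_of_ne (not_lt.mp hnl) hne)
      · intro h
        have hlt : f (FreeGroup.of i) < 1 := by
          have := hinv' _ h
          simpa using this
        simp [not_lt.mpr hlt.le]
  have litf : ∀ p : Fin n × Bool, p.1 ∈ A →
      (lit η p = false ↔ f (sgen p) < 1) := by
    intro p hp
    obtain ⟨kt, kn⟩ := key p hp
    rw [← Bool.not_eq_true, kt]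
    exact ⟨fun h => kn.lt_or_gt.resolve_right h, fun h => not_lt.mpr h.le⟩
  simp only [satPhi, Bool.and_eq_true, Bool.or_eq_true, Bool.not_eq_true']
  constructor
  · by_contra h
    rw [not_or, not_or] at h
    have ha := Bool.eq_false_iff.mpr h.1.1
    have hb := Bool.eq_false_iff.mpr h.1.2
    have hc := Bool.eq_false_iff.mpr h.2
    have := hneg _ _ _ ((litf r.1 h1).mp ha) ((litf r.2.1 h2).mp hb) ((litf r.2.2 h3).mp hc)
    exact absurd hrel this.ne
  · by_contra h
    rw [not_or, not_or] at h
    have ha := Bool.ne_false_iff.mp h.1.1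
    have hb := Bool.ne_false_iff.mp h.1.2
    have hc := Bool.ne_false_iff.mp h.2
    have := hpos _ _ _ ((key r.1 h1).1.mp ha) ((key r.2.1 h2).1.mp hb) ((key r.2.2 h3).1.mp hc)
    exact absurd hrel this.ne'
end
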